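/- arXiv:2205.04128 — 2 statements merged into one kernel-verified Lean document; each statement's English description precedes it below -/
import Mathlib

section
/- Let {b_j} satisfy b_0 = 1 and b_j ≥ 2 for j ≥ 1, and let A, B, y_k be as in the mixed-radix construction. If x ∈ A has the form x = ε_0 + ε_2 a_2 + ε_4 a_4 + ⋯ + ε_{2k−2} a_{2k−2} + ε_{2k} a_{2k} with 0 ≤ ε_{2j} ≤ b_{2j+1} − 1 and ε_{2k} ≥ 1, then A(x)B(x)/x ≤ A(y_k)B(y_k)/y_k. -/
open Filter

/-- The counting function of a set `A` of non-negative integers: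
`countBelow A x = #{a ∈ A : a ≤ x}`. -/
noncomputable def countBelow (A : Set ℕ) (x : ℕ) : ℕ := (A ∩ Set.Iic x).ncard

/-- `aSeq b j = Π_{i=0}^{j} b_i`. -/
def aSeq (b : ℕ → ℕ) (j : ℕ) : ℕ := ∏ i ∈ Finset.range (j + 1), b i

/-- The set of non-negative integers using only even-indexed digits in the
mixed-radix system associated to `b`. -/
def mixA (b : ℕ → ℕ) : Set ℕ :=
  { m | ∃ N : ℕ, ∃ ε : ℕ → ℕ, (∀ j, ε j ≤ b (2 * j + 1) - 1) ∧
      m = ∑ j ∈ Finset.range N, ε j * aSeq b (2 * j) }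

/-- The set of non-negative integers using only odd-indexed digits in the
mixed-radix system associated to `b`. -/
def mixB (b : ℕ → ℕ) : Set ℕ :=
  { m | ∃ N : ℕ, ∃ ε : ℕ → ℕ, (∀ j, ε j ≤ b (2 * j + 2) - 1) ∧
      m = ∑ j ∈ Finset.range N, ε j * aSeq b (2 * j + 1) }

/-- `yk b k = (b_1-1) + (b_3-1)a_2 + ⋯ + (b_{2k-1}-1)a_{2k-2} + a_{2k}`. -/
def yk (b : ℕ → ℕ) (k : ℕ) : ℕ :=
  (∑ i ∈ Finset.range k, (b (2 * i + 1) - 1) * aSeq b (2 * i)) + aSeq b (2 * k)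

namespace MR

def val (w δ : ℕ → ℕ) (n : ℕ) : ℕ := ∑ j ∈ Finset.range n, δ j * w j

def mixSet (Bs w : ℕ → ℕ) : Set ℕ :=
  { m | ∃ N : ℕ, ∃ δ : ℕ → ℕ, (∀ j, δ j ≤ Bs j - 1) ∧ m = val w δ N }

def C (Bs : ℕ → ℕ) (n : ℕ) : ℕ := ∏ i ∈ Finset.range n, Bs i

def dig (Bs : ℕ → ℕ) (j r : ℕ) : ℕ := r / C Bs j % Bs j

lemma C_zero (Bs : ℕ → ℕ) : C Bs 0 = 1 := rfl

lemma C_succ (Bs : ℕ → ℕ) (n : ℕ) : C Bs (n + 1) = C Bs n * Bs n :=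
  Finset.prod_range_succ _ _

lemma C_pos {Bs : ℕ → ℕ} (hB : ∀ j, 1 ≤ Bs j) (n : ℕ) : 0 < C Bs n :=
  Finset.prod_pos fun i _ => hB i

lemma C_dvd {Bs : ℕ → ℕ} {m n : ℕ} (h : m ≤ n) : C Bs m ∣ C Bs n := by
  unfold C
  exact Finset.prod_dvd_prod_of_subset _ _ _ (Finset.range_subset_range.2 h)

lemma val_zero (w δ : ℕ → ℕ) : val w δ 0 = 0 := rfl

lemma val_succ (w δ : ℕ → ℕ) (n : ℕ) : val w δ (n + 1) = val w δ n + δ n * w n :=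
  Finset.sum_range_succ _ _

lemma val_congr {w δ δ' : ℕ → ℕ} {n : ℕ} (h : ∀ j, j < n → δ j = δ' j) :
    val w δ n = val w δ' n :=
  Finset.sum_congr rfl fun j hj => by rw [h j (Finset.mem_range.1 hj)]

lemma single_le_val (w δ : ℕ → ℕ) {j n : ℕ} (hj : j < n) :
    δ j * w j ≤ val w δ n :=
  Finset.single_le_sum (f := fun i => δ i * w i) (fun i _ => Nat.zero_le _)
    (Finset.mem_range.2 hj)

section Adm

variable {Bs w w' : ℕ → ℕ}
variable (hB : ∀ j, 1 ≤ Bs j) (hw0 : 1 ≤ w 0) (hw : ∀ j, Bs j * w j ≤ w (j + 1))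

include hB hw in
lemma w_mono : Monotone w := by
  apply monotone_nat_of_le_succ
  intro j
  calc w j ≤ Bs j * w j := Nat.le_mul_of_pos_left _ (hB j)
    _ ≤ w (j + 1) := hw j

include hw0 hw in
/-- sum bound : bounded digit strings have value `< w n`. -/
lemma val_lt {δ : ℕ → ℕ} {n : ℕ} (hδ : ∀ j, j < n → δ j < Bs j) :
    val w δ n + 1 ≤ w n := by
  induction n with
  | zero => simpa [val] using hw0
  | succ n ih =>
      have h1 : val w δ n + 1 ≤ w n := ih (fun j hj => hδ j (hj.trans (Nat.lt_succ_self n)))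
      have h2 : δ n + 1 ≤ Bs n := hδ n (Nat.lt_succ_self n)
      calc val w δ (n + 1) + 1 = (val w δ n + 1) + δ n * w n := by
            rw [val_succ]; ring
        _ ≤ w n + δ n * w n := by omega
        _ = (δ n + 1) * w n := by ring
        _ ≤ Bs n * w n := Nat.mul_le_mul_right _ h2
        _ ≤ w (n + 1) := hw n

include hw0 hw in
/-- top digit dominates. -/
lemma val_lt_of_top {δ δ' : ℕ → ℕ} {n : ℕ} (hδ : ∀ j, j < n + 1 → δ j < Bs j)
    (h : δ n < δ' n) : val w δ (n + 1) < val w δ' (n + 1) := by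
  have h1 : val w δ n + 1 ≤ w n := val_lt hw0 hw (fun j hj => hδ j (hj.trans (Nat.lt_succ_self n)))
  have h2 : (δ n + 1) * w n ≤ δ' n * w n := Nat.mul_le_mul_right _ h
  have h3 : δ' n * w n ≤ val w δ' (n + 1) := by
    rw [val_succ]; omega
  rw [val_succ]
  nlinarith [Nat.zero_le (val w δ' n)]

variable (hw0' : 1 ≤ w' 0) (hw' : ∀ j, Bs j * w' j ≤ w' (j + 1))

include hw0 hw hw0' hw' in
/-- comparison transfer between two admissible weight systems. -/
lemma val_le_transfer {δ δ' : ℕ → ℕ} {n : ℕ} (hδ : ∀ j, j < n → δ j < Bs j)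
    (hδ' : ∀ j, j < n → δ' j < Bs j)
    (h : val w δ n ≤ val w δ' n) : val w' δ n ≤ val w' δ' n := by
  induction n with
  | zero => simp [val]
  | succ n ih =>
      rcases lt_trichotomy (δ n) (δ' n) with hlt | heq | hgt
      · exact (val_lt_of_top hw0' hw' hδ hlt).le
      · have hh : val w δ n ≤ val w δ' n := by
          rw [val_succ, val_succ, heq] at h; omega
        have := ih (fun j hj => hδ j (hj.trans (Nat.lt_succ_self n)))
          (fun j hj => hδ' j (hj.trans (Nat.lt_succ_self n))) hh
        rw [val_succ, val_succ, heq]; omega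
      · exact absurd h (not_le.2 (val_lt_of_top hw0 hw hδ' hgt))

include hw0 hw hw0' hw' in
lemma val_eq_transfer {δ δ' : ℕ → ℕ} {n : ℕ} (hδ : ∀ j, j < n → δ j < Bs j)
    (hδ' : ∀ j, j < n → δ' j < Bs j)
    (h : val w δ n = val w δ' n) : val w' δ n = val w' δ' n :=
  le_antisymm (val_le_transfer hw0 hw hw0' hw' hδ hδ' h.le)
    (val_le_transfer hw0 hw hw0' hw' hδ' hδ h.ge)

lemma C_adm (Bs : ℕ → ℕ) (j : ℕ) : Bs j * C Bs j ≤ C Bs (j + 1) := by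
  rw [C_succ, mul_comm]

include hB in
lemma dig_lt (j r : ℕ) : dig Bs j r < Bs j := Nat.mod_lt _ (hB j)

include hB in
/-- digit extraction is a section of `val` with the canonical weights. -/
lemma val_dig {n r : ℕ} (hr : r < C Bs n) :
    val (C Bs) (fun j => dig Bs j r) n = r := by
  induction n generalizing r with
  | zero =>
      rw [C_zero] at hr
      interval_cases r
      simp [val]
  | succ n ih =>
      have hcpos : 0 < C Bs n := C_pos hB n
      have hq : r / C Bs n < Bs n := by
        rw [Nat.div_lt_iff_lt_mul hcpos, mul_comm]
        rw [C_succ] at hr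
        exact hr
      have hdign : dig Bs n r = r / C Bs n := Nat.mod_eq_of_lt hq
      have hrem : r % C Bs n < C Bs n := Nat.mod_lt _ hcpos
      have hkey : ∀ j, j < n → dig Bs j r = dig Bs j (r % C Bs n) := by
        intro j hj
        obtain ⟨t, ht⟩ := (C_dvd hj : C Bs (j + 1) ∣ C Bs n)
        have hjpos : 0 < C Bs j := C_pos hB j
        set m := r % C Bs n with hm
        set q := r / C Bs n with hqd
        have h2 : m + C Bs n * q = r := by
          rw [hm, hqd]; exact Nat.mod_add_div r (C Bs n)
        rw [ht, C_succ] at h2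
        have e1 : r = m + C Bs j * (Bs j * (t * q)) := by
          rw [← h2]; ring
        show r / C Bs j % Bs j = m / C Bs j % Bs j
        conv_lhs => rw [e1]
        rw [Nat.add_mul_div_left _ _ hjpos, Nat.add_mul_mod_self_left]
      have heq : val (C Bs) (fun j => dig Bs j r) n
          = val (C Bs) (fun j => dig Bs j (r % C Bs n)) n := by
        unfold val
        exact Finset.sum_congr rfl (fun j hj => by
          simp only [hkey j (Finset.mem_range.1 hj)])
      rw [val_succ, heq, ih hrem, hdign, mul_comm]
      exact Nat.mod_add_div r (C Bs n)

include hB hw0 hw in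
/-- the value of the extracted digits, in any admissible weight system,
agrees with the value of any bounded digit string with the same canonical value. -/
lemma val_dig_eq {n r : ℕ} {δ : ℕ → ℕ} (hδ : ∀ j, j < n → δ j < Bs j)
    (hr : r < C Bs n) (hrv : r = val (C Bs) δ n) :
    val w (fun j => dig Bs j r) n = val w δ n := by
  apply val_eq_transfer (w := C Bs) (Bs := Bs) (le_refl 1) (C_adm Bs) hw0 hw
    (fun j _ => dig_lt hB j r) hδ
  rw [val_dig hB hr, hrv]

include hB hw0 hw in
/-- The master counting lemma. -/
lemma countBelow_mixSet {x n : ℕ} (hxn : x + 1 ≤ w n) :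
    countBelow (mixSet Bs w) x =
      ((Finset.range (C Bs n)).filter
        (fun r => val w (fun j => dig Bs j r) n ≤ x)).card := by
  have hmono : Monotone w := w_mono hB hw
  set ψ : ℕ → ℕ := fun r => val w (fun j => dig Bs j r) n with hψ
  have hset : mixSet Bs w ∩ Set.Iic x =
      ↑(((Finset.range (C Bs n)).filter (fun r => ψ r ≤ x)).image ψ) := by
    ext m
    simp only [Set.mem_inter_iff, Set.mem_Iic, Finset.coe_image, Set.mem_image,
      Finset.mem_coe, Finset.mem_filter, Finset.mem_range]
    constructor
    · rintro ⟨⟨N, δ, hδ, rfl⟩, hm⟩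
      set δ'' : ℕ → ℕ := fun j => if j < N then δ j else 0 with hδ''
      have hδ''b : ∀ j, δ'' j < Bs j := by
        intro j
        by_cases h : j < N
        · simp only [hδ'', h, if_pos]
          have := hδ j; have := hB j; omega
        · simp only [hδ'', h, if_neg, not_false_iff]
          exact hB j
      have hv1 : val w δ N = val w δ'' N :=
        val_congr fun j hj => by simp [hδ'', hj]
      have hsupp : ∀ j, n ≤ j → δ'' j = 0 := by
        intro j hj
        by_contra hne
        have h1 : 1 ≤ δ'' j := Nat.one_le_iff_ne_zero.2 hne
        have hjN : j < N := by
          by_contra h; simp [hδ'', h] at hne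
        have h2 : w j ≤ val w δ'' N := by
          calc w j = 1 * w j := (one_mul _).symm
            _ ≤ δ'' j * w j := Nat.mul_le_mul_right _ h1
            _ ≤ val w δ'' N := single_le_val w δ'' hjN
        have h3 : w n ≤ w j := hmono hj
        omega
      have hv2 : val w δ'' N = val w δ'' n := by
        rcases le_total N n with h | h
        · unfold val
          apply Finset.sum_subset (Finset.range_subset_range.2 h)
          intro j hj hjN
          have : ¬ j < N := fun hc => hjN (Finset.mem_range.2 hc)
          simp [hδ'', this]
        · unfold val
          symm
          apply Finset.sum_subset (Finset.range_subset_range.2 h)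
          intro j hj hjn
          have : n ≤ j := le_of_not_gt fun hc => hjn (Finset.mem_range.2 hc)
          rw [hsupp j this, zero_mul]
      set r := val (C Bs) δ'' n with hr
      have hrlt : r < C Bs n := by
        have := val_lt (Bs := Bs) (w := C Bs) (n := n) (le_refl 1) (C_adm Bs)
          (fun j _ => hδ''b j)
        omega
      have hψr : ψ r = val w δ'' n :=
        val_dig_eq hB hw0 hw (fun j _ => hδ''b j) hrlt hr
      refine ⟨r, ⟨hrlt, ?_⟩, ?_⟩
      · rw [hψr, ← hv2, ← hv1]; exact hm
      · rw [hψr, ← hv2, ← hv1]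
    · rintro ⟨r, ⟨hrlt, hrx⟩, rfl⟩
      refine ⟨⟨n, fun j => if j < n then dig Bs j r else 0, ?_, ?_⟩, hrx⟩
      · intro j
        by_cases h : j < n
        · simp only [h, if_pos]
          have := dig_lt hB (Bs := Bs) j r; omega
        · simp [h]
      · exact (val_congr fun j hj => by simp [hj]).symm
  rw [countBelow, hset, Set.ncard_coe_finset]
  apply Finset.card_image_of_injOn
  intro r hr r' hr' h
  simp only [Finset.mem_coe, Finset.mem_filter, Finset.mem_range] at hr hr'
  have e1 : val (C Bs) (fun j => dig Bs j r) n = val (C Bs) (fun j => dig Bs j r') n := by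
    apply val_eq_transfer hw0 hw (w' := C Bs) (le_refl 1) (C_adm Bs)
      (fun j _ => dig_lt hB j r) (fun j _ => dig_lt hB j r') h
  rwa [val_dig hB hr.1, val_dig hB hr'.1] at e1

include hB in
lemma telescope (n : ℕ) : (∑ j ∈ Finset.range n, (Bs j - 1) * C Bs j) + 1 = C Bs n := by
  induction n with
  | zero => simp [C_zero]
  | succ n ih =>
      rw [Finset.sum_range_succ, C_succ]
      have h1 : Bs n - 1 + 1 = Bs n := Nat.succ_pred_eq_of_pos (hB n)
      nlinarith [ih, h1]

end Adm

end MR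

namespace MR

lemma val_add (w δ δ' : ℕ → ℕ) (n : ℕ) :
    val w (fun j => δ j + δ' j) n = val w δ n + val w δ' n := by
  unfold val
  rw [← Finset.sum_add_distrib]
  exact Finset.sum_congr rfl fun j _ => add_mul _ _ _

end MR
namespace MRS

def BsA (b : ℕ → ℕ) : ℕ → ℕ := fun j => b (2 * j + 1)
def BsB (b : ℕ → ℕ) : ℕ → ℕ := fun j => b (2 * j + 2)
def wA (b : ℕ → ℕ) : ℕ → ℕ := fun j => aSeq b (2 * j)
def wB (b : ℕ → ℕ) : ℕ → ℕ := fun j => aSeq b (2 * j + 1)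

lemma aSeq_succ (b : ℕ → ℕ) (n : ℕ) : aSeq b (n + 1) = aSeq b n * b (n + 1) :=
  Finset.prod_range_succ _ _

section spec

variable {b : ℕ → ℕ} (hb0 : b 0 = 1) (hb : ∀ j, 1 ≤ j → 2 ≤ b j)

include hb0 hb

lemma hb1 : ∀ i, 1 ≤ b i := by
  intro i
  rcases Nat.eq_zero_or_pos i with h | h
  · rw [h, hb0]
  · exact le_trans (by norm_num) (hb i h)

lemma aSeq_zero : aSeq b 0 = 1 := by simp [aSeq, hb0]

lemma mixA_eq : mixA b = MR.mixSet (BsA b) (wA b) := rfl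

lemma mixB_eq : mixB b = MR.mixSet (BsB b) (wB b) := rfl

lemma hBA : ∀ j, 1 ≤ BsA b j := by
  intro j
  show 1 ≤ b (2 * j + 1)
  have := hb (2 * j + 1) (by omega); omega

lemma hBB : ∀ j, 1 ≤ BsB b j := by
  intro j
  show 1 ≤ b (2 * j + 2)
  have := hb (2 * j + 2) (by omega); omega

lemma hwA0 : 1 ≤ wA b 0 := le_of_eq (aSeq_zero hb0 hb).symm

lemma hwA : ∀ j, BsA b j * wA b j ≤ wA b (j + 1) := by
  intro j
  show b (2 * j + 1) * aSeq b (2 * j) ≤ aSeq b (2 * (j + 1))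
  have e1 : aSeq b (2 * j + 1) = aSeq b (2 * j) * b (2 * j + 1) := aSeq_succ b (2 * j)
  have e2 : aSeq b (2 * j + 1 + 1) = aSeq b (2 * j + 1) * b (2 * j + 1 + 1) :=
    aSeq_succ b (2 * j + 1)
  have h3 : 2 * (j + 1) = 2 * j + 1 + 1 := by ring
  have h2 : 1 ≤ b (2 * j + 1 + 1) := hb1 hb0 hb _
  rw [h3, e2, e1, mul_comm (b (2 * j + 1)) (aSeq b (2 * j))]
  exact Nat.le_mul_of_pos_right _ h2

lemma hwB0 : 1 ≤ wB b 0 := by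
  show 1 ≤ aSeq b (2 * 0 + 1)
  have : aSeq b 1 = aSeq b 0 * b 1 := aSeq_succ b 0
  have h0 := aSeq_zero hb0 hb
  have h1 := hb 1 le_rfl
  simp only [show 2 * 0 + 1 = 1 from rfl, this, h0]
  omega

lemma hwB : ∀ j, BsB b j * wB b j ≤ wB b (j + 1) := by
  intro j
  show b (2 * j + 2) * aSeq b (2 * j + 1) ≤ aSeq b (2 * (j + 1) + 1)
  have e1 : aSeq b (2 * j + 1 + 1) = aSeq b (2 * j + 1) * b (2 * j + 1 + 1) :=
    aSeq_succ b (2 * j + 1)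
  have e2 : aSeq b (2 * j + 1 + 1 + 1) = aSeq b (2 * j + 1 + 1) * b (2 * j + 1 + 1 + 1) :=
    aSeq_succ b (2 * j + 1 + 1)
  have h3 : 2 * (j + 1) + 1 = 2 * j + 1 + 1 + 1 := by ring
  have h4 : b (2 * j + 2) = b (2 * j + 1 + 1) := by norm_num
  have h2 : 1 ≤ b (2 * j + 1 + 1 + 1) := hb1 hb0 hb _
  rw [h3, e2, e1, h4, mul_comm (b (2 * j + 1 + 1)) (aSeq b (2 * j + 1))]
  exact Nat.le_mul_of_pos_right _ h2

lemma aSeq_even : ∀ n, aSeq b (2 * n) = MR.C (BsA b) n * MR.C (BsB b) n := by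
  intro n
  induction n with
  | zero => simp [aSeq_zero hb0 hb, MR.C_zero]
  | succ n ih =>
      have h1 : 2 * (n + 1) = (2 * n + 1) + 1 := by ring
      rw [h1, aSeq_succ, aSeq_succ, ih, MR.C_succ, MR.C_succ]
      show _ = MR.C (BsA b) n * b (2 * n + 1) * (MR.C (BsB b) n * b (2 * n + 2))
      ring

/-- values of `A`-type digit strings of length `n+1` are less than `a_{2n+1}`. -/
lemma SB2A {δ : ℕ → ℕ} : ∀ n, (∀ j, j < n + 1 → δ j < b (2 * j + 1)) →
    MR.val (wA b) δ (n + 1) + 1 ≤ aSeq b (2 * n + 1) := by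
  intro n
  induction n with
  | zero =>
      intro hδ
      have h := hδ 0 (by norm_num)
      have e : MR.val (wA b) δ 1 = δ 0 * aSeq b 0 := by
        rw [MR.val_succ, MR.val_zero, zero_add]
        show δ 0 * aSeq b (2 * 0) = δ 0 * aSeq b 0
        norm_num
      rw [e, aSeq_zero hb0 hb]
      have e2 : aSeq b (2 * 0 + 1) = aSeq b 0 * b 1 := aSeq_succ b 0
      rw [e2, aSeq_zero hb0 hb]
      simpa using h
  | succ n ih =>
      intro hδ
      have h1 := ih (fun j hj => hδ j (by omega))
      have h2 : δ (n + 1) < b (2 * (n + 1) + 1) := hδ (n + 1) (by omega)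
      rw [MR.val_succ]
      have e1 : 2 * (n + 1) = (2 * n + 1) + 1 := by ring
      have e2 : 2 * (n + 1) + 1 = (2 * (n + 1)) + 1 := rfl
      have ha1 : aSeq b (2 * (n + 1)) = aSeq b (2 * n + 1) * b (2 * (n + 1)) := by
        rw [e1, aSeq_succ]
      have ha2 : aSeq b (2 * (n + 1) + 1) = aSeq b (2 * (n + 1)) * b (2 * (n + 1) + 1) := by
        rw [aSeq_succ]
      have hwn : wA b (n + 1) = aSeq b (2 * (n + 1)) := rfl
      rw [hwn, ha2]
      have hmono : aSeq b (2 * n + 1) ≤ aSeq b (2 * (n + 1)) := by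
        rw [ha1]
        exact Nat.le_mul_of_pos_right _ (hb1 hb0 hb _)
      nlinarith [Nat.zero_le (aSeq b (2 * (n + 1)))]

/-- values of `B`-type digit strings of length `n` are less than `a_{2n}`. -/
lemma SB2B {δ : ℕ → ℕ} : ∀ n, (∀ j, j < n → δ j < b (2 * j + 2)) →
    MR.val (wB b) δ n + 1 ≤ aSeq b (2 * n) := by
  intro n
  induction n with
  | zero =>
      intro _
      rw [MR.val_zero]
      simp [aSeq_zero hb0 hb]
  | succ n ih =>
      intro hδ
      have h1 := ih (fun j hj => hδ j (by omega))
      have h2 : δ n < b (2 * n + 2) := hδ n (by omega)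
      rw [MR.val_succ]
      have e1 : 2 * (n + 1) = (2 * n + 1) + 1 := by ring
      have ha1 : aSeq b (2 * n + 1) = aSeq b (2 * n) * b (2 * n + 1) := aSeq_succ b _
      have ha2 : aSeq b (2 * (n + 1)) = aSeq b (2 * n + 1) * b (2 * n + 2) := by
        rw [e1, aSeq_succ]
      have hwn : wB b n = aSeq b (2 * n + 1) := rfl
      have hmono : aSeq b (2 * n) ≤ aSeq b (2 * n + 1) := by
        rw [ha1]
        exact Nat.le_mul_of_pos_right _ (hb1 hb0 hb _)
      rw [hwn, ha2]
      nlinarith [Nat.zero_le (aSeq b (2 * n + 1))]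

variable {k : ℕ} {ε : ℕ → ℕ}

/-- A-count. -/
lemma countA (hbd : ∀ j, j < k + 1 → ε j < b (2 * j + 1)) :
    countBelow (mixA b) (MR.val (wA b) ε (k + 1)) = MR.val (MR.C (BsA b)) ε (k + 1) + 1 := by
  rw [mixA_eq hb0 hb]
  rw [MR.countBelow_mixSet (hBA hb0 hb) (hwA0 hb0 hb) (hwA hb0 hb)
    (MR.val_lt (hwA0 hb0 hb) (hwA hb0 hb) (fun j hj => hbd j hj))]
  have hWlt : MR.val (MR.C (BsA b)) ε (k + 1) + 1 ≤ MR.C (BsA b) (k + 1) :=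
    MR.val_lt (le_refl 1) (MR.C_adm (BsA b)) (fun j hj => hbd j hj)
  have hfe : (Finset.range (MR.C (BsA b) (k + 1))).filter
      (fun r => MR.val (wA b) (fun j => MR.dig (BsA b) j r) (k + 1) ≤ MR.val (wA b) ε (k + 1))
      = Finset.range (MR.val (MR.C (BsA b)) ε (k + 1) + 1) := by
    ext r
    simp only [Finset.mem_filter, Finset.mem_range]
    constructor
    · rintro ⟨hrlt, hcond⟩
      have h1 : MR.val (MR.C (BsA b)) (fun j => MR.dig (BsA b) j r) (k + 1)
          ≤ MR.val (MR.C (BsA b)) ε (k + 1) :=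
        MR.val_le_transfer (hwA0 hb0 hb) (hwA hb0 hb) (le_refl 1) (MR.C_adm (BsA b))
          (fun j _ => MR.dig_lt (hBA hb0 hb) j r) (fun j hj => hbd j hj) hcond
      rw [MR.val_dig (hBA hb0 hb) hrlt] at h1
      omega
    · intro hr
      have hrlt : r < MR.C (BsA b) (k + 1) := by omega
      refine ⟨hrlt, ?_⟩
      apply MR.val_le_transfer (le_refl 1) (MR.C_adm (BsA b)) (hwA0 hb0 hb) (hwA hb0 hb)
        (fun j _ => MR.dig_lt (hBA hb0 hb) j r) (fun j hj => hbd j hj)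
      rw [MR.val_dig (hBA hb0 hb) hrlt]
      omega
  rw [hfe, Finset.card_range]

/-- B-count. -/
lemma countB (hbd : ∀ j, j < k + 1 → ε j < b (2 * j + 1)) (hε1 : 1 ≤ ε k) :
    countBelow (mixB b) (MR.val (wA b) ε (k + 1)) = MR.C (BsB b) k := by
  rw [mixB_eq hb0 hb]
  have hxn : MR.val (wA b) ε (k + 1) + 1 ≤ wB b k := SB2A hb0 hb k hbd
  rw [MR.countBelow_mixSet (hBB hb0 hb) (hwB0 hb0 hb) (hwB hb0 hb) hxn]
  have hfe : (Finset.range (MR.C (BsB b) k)).filter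
      (fun r => MR.val (wB b) (fun j => MR.dig (BsB b) j r) k ≤ MR.val (wA b) ε (k + 1))
      = Finset.range (MR.C (BsB b) k) := by
    apply Finset.filter_true_of_mem
    intro r _
    have h1 : MR.val (wB b) (fun j => MR.dig (BsB b) j r) k + 1 ≤ aSeq b (2 * k) :=
      SB2B hb0 hb k (fun j _ => MR.dig_lt (hBB hb0 hb) j r)
    have h2 : aSeq b (2 * k) ≤ MR.val (wA b) ε (k + 1) := by
      have h3 : ε k * wA b k ≤ MR.val (wA b) ε (k + 1) :=
        MR.single_le_val (wA b) ε (by omega)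
      have h4 : wA b k ≤ ε k * wA b k := Nat.le_mul_of_pos_left _ hε1
      exact le_trans (le_trans (le_of_eq rfl) h4) h3
    omega
  rw [hfe, Finset.card_range]

end spec

end MRS

lemma keyineq (T U S D P A m : ℕ) (h1 : A = T + U + 1) (h2 : S + D + 1 ≤ P)
    (h3 : 2 * D * A ≤ U * P) :
    (T + (m + 1) * A + 1) * ((S + D) + P) ≤ 2 * A * (S + (m + 1) * P) := by
  have step1 : (T + 1 + A) * S ≤ 2 * A * S := Nat.mul_le_mul_right _ (by omega)
  have step2 : (T + 1 + A) * D ≤ U * P := by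
    calc (T + 1 + A) * D ≤ (2 * A) * D := Nat.mul_le_mul_right _ (by omega)
      _ = 2 * D * A := by ring
      _ ≤ U * P := h3
  have step3 : (T + 1 + A) * P + U * P = 2 * A * P := by
    rw [← add_mul]
    congr 1
    omega
  have hm : m * A * (S + D + P) ≤ 2 * A * (m * P) := by
    calc m * A * (S + D + P) ≤ m * A * (2 * P) := Nat.mul_le_mul_left _ (by omega)
      _ = 2 * A * (m * P) := by ring
  calc (T + (m + 1) * A + 1) * ((S + D) + P)
      = (T + 1 + A) * S + (T + 1 + A) * D + (T + 1 + A) * P + m * A * (S + D + P) := by ring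
    _ ≤ 2 * A * S + U * P + (T + 1 + A) * P + 2 * A * (m * P) := by
        have := add_le_add (add_le_add (add_le_add step1 step2) (le_refl ((T + 1 + A) * P))) hm
        linarith
    _ = 2 * A * S + ((T + 1 + A) * P + U * P) + 2 * A * (m * P) := by ring
    _ = 2 * A * S + 2 * A * P + 2 * A * (m * P) := by rw [step3]
    _ = 2 * A * (S + (m + 1) * P) := by ring

theorem stmt9 (b : ℕ → ℕ) (hb0 : b 0 = 1) (hb : ∀ j, 1 ≤ j → 2 ≤ b j)
    (k : ℕ) (hk : 1 ≤ k) (ε : ℕ → ℕ)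
    (hε : ∀ j, j ≤ k → ε j ≤ b (2 * j + 1) - 1) (hεk : 1 ≤ ε k)
    (x : ℕ) (hx : x = ∑ j ∈ Finset.range (k + 1), ε j * aSeq b (2 * j)) :
    ((countBelow (mixA b) x : ℝ) * countBelow (mixB b) x) / x
      ≤ ((countBelow (mixA b) (yk b k) : ℝ) * countBelow (mixB b) (yk b k)) / (yk b k) := by
  have hbd : ∀ j, j < k + 1 → ε j < b (2 * j + 1) := by
    intro j hj
    have h1 := hε j (by omega)
    have h2 := hb (2 * j + 1) (by omega)
    omega
  set A := MR.C (MRS.BsA b) k with hA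
  set Bk := MR.C (MRS.BsB b) k with hBk
  have hApos : 0 < A := MR.C_pos (MRS.hBA hb0 hb) k
  have hBkpos : 0 < Bk := MR.C_pos (MRS.hBB hb0 hb) k
  set εy : ℕ → ℕ := fun j => if j < k then b (2 * j + 1) - 1 else if j = k then 1 else 0
    with hεydef
  have hbdy : ∀ j, j < k + 1 → εy j < b (2 * j + 1) := by
    intro j hj
    have h2 := hb (2 * j + 1) (by omega)
    by_cases h : j < k
    · simp only [hεydef, h, if_pos]; omega
    · have hj' : j = k := by omega
      subst hj'
      simp [hεydef]; omega
  have hεy1 : 1 ≤ εy k := by simp [hεydef]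
  have hxval : x = MR.val (MRS.wA b) ε (k + 1) := hx
  have hyval : yk b k = MR.val (MRS.wA b) εy (k + 1) := by
    rw [yk, MR.val_succ]
    congr 1
    · rw [MR.val]
      apply Finset.sum_congr rfl
      intro j hj
      have hj' := Finset.mem_range.1 hj
      simp [hεydef, hj', MRS.wA]
    · simp [hεydef, MRS.wA]
  -- the counts
  have hAx : countBelow (mixA b) x
      = MR.val (MR.C (MRS.BsA b)) ε (k + 1) + 1 := by
    rw [hxval]; exact MRS.countA hb0 hb hbd
  have hBx : countBelow (mixB b) x = Bk := by
    rw [hxval, hBk]; exact MRS.countB hb0 hb hbd hεk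
  have htel : MR.val (MR.C (MRS.BsA b)) (fun j => MRS.BsA b j - 1) k + 1
      = MR.C (MRS.BsA b) k := by
    have h2 := MR.telescope (MRS.hBA hb0 hb) k
    rw [MR.val]
    simpa using h2
  have hAy : countBelow (mixA b) (yk b k) = 2 * A := by
    rw [hyval, MRS.countA hb0 hb hbdy, MR.val_succ]
    have h1 : MR.val (MR.C (MRS.BsA b)) εy k
        = MR.val (MR.C (MRS.BsA b)) (fun j => MRS.BsA b j - 1) k :=
      MR.val_congr fun j hj => by simp [hεydef, hj, MRS.BsA]
    have h3 : εy k * MR.C (MRS.BsA b) k = A := by simp [hεydef, hA]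
    rw [h1, h3]
    omega
  have hBy : countBelow (mixB b) (yk b k) = Bk := by
    rw [hyval, hBk]; exact MRS.countB hb0 hb hbdy hεy1
  -- arithmetic setup
  set T := MR.val (MR.C (MRS.BsA b)) ε k with hT
  set S := MR.val (MRS.wA b) ε k with hS
  set εU : ℕ → ℕ := fun j => b (2 * j + 1) - 1 - ε j with hεU
  set U := MR.val (MR.C (MRS.BsA b)) εU k with hU
  set D := MR.val (MRS.wA b) εU k with hD
  have hP : MRS.wA b k = A * Bk := MRS.aSeq_even hb0 hb k
  have hcongr1 : ∀ j, j < k → ε j + εU j = MRS.BsA b j - 1 := by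
    intro j hj
    have := hbd j (by omega)
    simp only [hεU, MRS.BsA]
    omega
  have f1 : A = T + U + 1 := by
    have hsum : MR.val (MR.C (MRS.BsA b)) (fun j => ε j + εU j) k
        = MR.val (MR.C (MRS.BsA b)) (fun j => MRS.BsA b j - 1) k :=
      MR.val_congr fun j hj => by rw [hcongr1 j hj]
    have hadd := MR.val_add (MR.C (MRS.BsA b)) ε εU k
    rw [hsum] at hadd
    omega
  have hsumw : S + D = MR.val (MRS.wA b) (fun j => MRS.BsA b j - 1) k := by
    have hadd := MR.val_add (MRS.wA b) ε εU k
    have hsum : MR.val (MRS.wA b) (fun j => ε j + εU j) k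
        = MR.val (MRS.wA b) (fun j => MRS.BsA b j - 1) k :=
      MR.val_congr fun j hj => by rw [hcongr1 j hj]
    rw [hsum] at hadd
    omega
  have f2 : yk b k = (S + D) + A * Bk := by
    rw [hyval, MR.val_succ]
    congr 1
    · rw [hsumw]
      exact (MR.val_congr fun j hj => by simp [hεydef, hj, MRS.BsA]).symm
    · rw [← hP]
      simp [hεydef]
  have f3 : S + D + 1 ≤ A * Bk := by
    rw [← hP, hsumw]
    exact MR.val_lt (MRS.hwA0 hb0 hb) (MRS.hwA hb0 hb)
      (fun j hj => by
        have := MRS.hBA hb0 hb j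
        show MRS.BsA b j - 1 < MRS.BsA b j
        omega)
  have hcB2 : ∀ j, j < k → 2 * MR.C (MRS.BsB b) j ≤ Bk := by
    intro j hj
    have h2 : (2 : ℕ) ≤ MRS.BsB b j := hb (2 * j + 2) (by omega)
    have h1 : 2 * MR.C (MRS.BsB b) j ≤ MR.C (MRS.BsB b) (j + 1) := by
      rw [MR.C_succ]
      calc 2 * MR.C (MRS.BsB b) j = MR.C (MRS.BsB b) j * 2 := by ring
        _ ≤ MR.C (MRS.BsB b) j * MRS.BsB b j := Nat.mul_le_mul_left _ h2
    have h3 : MR.C (MRS.BsB b) (j + 1) ≤ Bk :=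
      Nat.le_of_dvd hBkpos (MR.C_dvd hj)
    omega
  have f4 : 2 * D ≤ U * Bk := by
    rw [hD, hU, MR.val, MR.val, Finset.mul_sum, Finset.sum_mul]
    apply Finset.sum_le_sum
    intro j hj
    have hj' := Finset.mem_range.1 hj
    have he : MRS.wA b j = MR.C (MRS.BsA b) j * MR.C (MRS.BsB b) j :=
      MRS.aSeq_even hb0 hb j
    show 2 * (εU j * MRS.wA b j) ≤ εU j * MR.C (MRS.BsA b) j * Bk
    calc 2 * (εU j * MRS.wA b j)
        = εU j * MR.C (MRS.BsA b) j * (2 * MR.C (MRS.BsB b) j) := by rw [he]; ring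
      _ ≤ εU j * MR.C (MRS.BsA b) j * Bk :=
          Nat.mul_le_mul_left _ (hcB2 j hj')
  have f4' : 2 * D * A ≤ U * (A * Bk) := by
    calc 2 * D * A ≤ U * Bk * A := Nat.mul_le_mul_right _ f4
      _ = U * (A * Bk) := by ring
  set m := ε k - 1 with hmdef
  have hmk : ε k = m + 1 := by omega
  have hxeq : x = S + (m + 1) * (A * Bk) := by
    rw [hxval, MR.val_succ, hmk, hP]
  have hnum : MR.val (MR.C (MRS.BsA b)) ε (k + 1) = T + (m + 1) * A := by
    rw [MR.val_succ, hmk, hA]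
  have key := keyineq T U S D (A * Bk) A m f1 f3 f4'
  rw [← f2, ← hxeq] at key
  -- positivity
  have hx0 : 0 < x := by
    have h4 : 0 < A * Bk := Nat.mul_pos hApos hBkpos
    rw [hxeq]
    positivity
  have hy0 : 0 < yk b k := by
    have h4 : 0 < A * Bk := Nat.mul_pos hApos hBkpos
    rw [f2]
    positivity
  rw [hAx, hBx, hAy, hBy, hnum]
  rw [div_le_div_iff₀ (by exact_mod_cast hx0) (by exact_mod_cast hy0)]
  have keyR : ((T + (m + 1) * A + 1 : ℕ) : ℝ) * ((yk b k : ℕ) : ℝ)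
      ≤ ((2 * A : ℕ) : ℝ) * ((x : ℕ) : ℝ) := by exact_mod_cast key
  push_cast at keyR ⊢
  have hBk0 : (0 : ℝ) ≤ (Bk : ℝ) := by positivity
  nlinarith [mul_le_mul_of_nonneg_left keyR hBk0]
end

section
/- Let {b_j} satisfy b_0 = 1 and b_j ≥ 2 for j ≥ 1, and let A, B be as in the mixed-radix construction. For x_k = a_{2k} − 1 one has A(x_k) = b_1 b_3 b_5 ⋯ b_{2k−1}, B(x_k) = b_2 b_4 b_6 ⋯ b_{2k}, and consequently A(x_k)B(x_k) − x_k = 1 for every k ≥ 1. -/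
open Filter

section Aux

variable {b : ℕ → ℕ} (hb0 : b 0 = 1) (hb : ∀ j, 1 ≤ j → 2 ≤ b j)

lemma astep (j : ℕ) : aSeq b (j + 1) = aSeq b j * b (j + 1) :=
  Finset.prod_range_succ b (j + 1)

include hb0 hb

lemma bpos (i : ℕ) : 1 ≤ b i := by
  rcases Nat.eq_zero_or_pos i with h | h
  · simp [h, hb0]
  · exact le_trans (by norm_num) (hb i h)

lemma apos (j : ℕ) : 0 < aSeq b j := by
  apply Finset.prod_pos
  intro i _
  exact bpos hb0 hb i

lemma amono : Monotone (aSeq b) := by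
  apply monotone_nat_of_le_succ
  intro j
  rw [astep]
  exact Nat.le_mul_of_pos_right _ (bpos hb0 hb (j + 1))

lemma sumA_lt (k : ℕ) (ε : ℕ → ℕ) (hε : ∀ j, ε j ≤ b (2 * j + 1) - 1) :
    ∑ j ∈ Finset.range k, ε j * aSeq b (2 * j) < aSeq b (2 * k) := by
  induction k with
  | zero => simp [aSeq, hb0]
  | succ k ih =>
    have hbk : 2 ≤ b (2 * k + 1) := hb _ (by omega)
    have h1 : ε k + 1 ≤ b (2 * k + 1) := by have := hε k; omega
    have h2 : 2 * (k + 1) = (2 * k + 1) + 1 := by ring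
    calc ∑ j ∈ Finset.range (k + 1), ε j * aSeq b (2 * j)
        = (∑ j ∈ Finset.range k, ε j * aSeq b (2 * j)) + ε k * aSeq b (2 * k) :=
          Finset.sum_range_succ _ _
      _ < aSeq b (2 * k) + ε k * aSeq b (2 * k) := by omega
      _ = (ε k + 1) * aSeq b (2 * k) := by ring
      _ ≤ b (2 * k + 1) * aSeq b (2 * k) := Nat.mul_le_mul_right _ h1
      _ = aSeq b (2 * k + 1) := by rw [astep]; ring
      _ ≤ aSeq b (2 * (k + 1)) := by rw [h2]; exact amono hb0 hb (Nat.le_succ _)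

lemma sumB_lt (k : ℕ) (ε : ℕ → ℕ) (hε : ∀ j, ε j ≤ b (2 * j + 2) - 1) :
    ∑ j ∈ Finset.range k, ε j * aSeq b (2 * j + 1) < aSeq b (2 * k) := by
  induction k with
  | zero => simp [aSeq, hb0]
  | succ k ih =>
    have hbk : 2 ≤ b (2 * k + 2) := hb _ (by omega)
    have h1 : ε k + 1 ≤ b (2 * k + 2) := by have := hε k; omega
    have hmono : aSeq b (2 * k) ≤ aSeq b (2 * k + 1) := amono hb0 hb (Nat.le_succ _)
    have h2 : 2 * (k + 1) = (2 * k + 1) + 1 := by ring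
    calc ∑ j ∈ Finset.range (k + 1), ε j * aSeq b (2 * j + 1)
        = (∑ j ∈ Finset.range k, ε j * aSeq b (2 * j + 1)) + ε k * aSeq b (2 * k + 1) :=
          Finset.sum_range_succ _ _
      _ < aSeq b (2 * k + 1) + ε k * aSeq b (2 * k + 1) := by omega
      _ = (ε k + 1) * aSeq b (2 * k + 1) := by ring
      _ ≤ b (2 * k + 2) * aSeq b (2 * k + 1) := Nat.mul_le_mul_right _ h1
      _ = aSeq b (2 * (k + 1)) := by
            rw [h2, astep (2 * k + 1), show (2 * k + 1) + 1 = 2 * k + 2 from by ring]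
            ring

lemma memA_iff (m k : ℕ) :
    (m ∈ mixA b ∧ m < aSeq b (2 * k)) ↔
      ∃ ε : ℕ → ℕ, (∀ j, ε j ≤ b (2 * j + 1) - 1) ∧
        m = ∑ j ∈ Finset.range k, ε j * aSeq b (2 * j) := by
  constructor
  · rintro ⟨⟨N, ε, hε, rfl⟩, hlt⟩
    have hz : ∀ j, k ≤ j → j < N → ε j = 0 := by
      intro j hkj hjN
      by_contra h
      have h1 : aSeq b (2 * k) ≤ aSeq b (2 * j) := amono hb0 hb (by omega)
      have h2 : aSeq b (2 * j) ≤ ε j * aSeq b (2 * j) :=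
        Nat.le_mul_of_pos_left _ (by omega)
      have h3 : ε j * aSeq b (2 * j) ≤ ∑ i ∈ Finset.range N, ε i * aSeq b (2 * i) :=
        Finset.single_le_sum (f := fun i => ε i * aSeq b (2 * i))
          (fun i _ => Nat.zero_le _) (Finset.mem_range.mpr hjN)
      omega
    refine ⟨fun j => if j < N then ε j else 0, fun j => ?_, ?_⟩
    · dsimp only
      split
      · exact hε j
      · exact Nat.zero_le _
    · have e1 : ∑ j ∈ Finset.range N, ε j * aSeq b (2 * j)
          = ∑ j ∈ Finset.range N, (if j < N then ε j else 0) * aSeq b (2 * j) :=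
        Finset.sum_congr rfl (fun j hj => by rw [if_pos (Finset.mem_range.mp hj)])
      have e2 : ∑ j ∈ Finset.range N, (if j < N then ε j else 0) * aSeq b (2 * j)
          = ∑ j ∈ Finset.range (max k N), (if j < N then ε j else 0) * aSeq b (2 * j) := by
        apply Finset.sum_subset (Finset.range_subset_range.mpr (le_max_right _ _))
        intro j _ hj
        rw [Finset.mem_range] at hj
        rw [if_neg (by omega)]
        ring
      have e3 : ∑ j ∈ Finset.range k, (if j < N then ε j else 0) * aSeq b (2 * j)
          = ∑ j ∈ Finset.range (max k N), (if j < N then ε j else 0) * aSeq b (2 * j) := by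
        apply Finset.sum_subset (Finset.range_subset_range.mpr (le_max_left _ _))
        intro j _ hj
        rw [Finset.mem_range] at hj
        split
        · rw [hz j (by omega) (by assumption)]; ring
        · ring
      rw [e1, e2, ← e3]
  · rintro ⟨ε, hε, rfl⟩
    exact ⟨⟨k, ε, hε, rfl⟩, sumA_lt hb0 hb k ε hε⟩

lemma memB_iff (m k : ℕ) :
    (m ∈ mixB b ∧ m < aSeq b (2 * k)) ↔
      ∃ ε : ℕ → ℕ, (∀ j, ε j ≤ b (2 * j + 2) - 1) ∧
        m = ∑ j ∈ Finset.range k, ε j * aSeq b (2 * j + 1) := by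
  constructor
  · rintro ⟨⟨N, ε, hε, rfl⟩, hlt⟩
    have hz : ∀ j, k ≤ j → j < N → ε j = 0 := by
      intro j hkj hjN
      by_contra h
      have h1 : aSeq b (2 * k) ≤ aSeq b (2 * j + 1) := amono hb0 hb (by omega)
      have h2 : aSeq b (2 * j + 1) ≤ ε j * aSeq b (2 * j + 1) :=
        Nat.le_mul_of_pos_left _ (by omega)
      have h3 : ε j * aSeq b (2 * j + 1) ≤ ∑ i ∈ Finset.range N, ε i * aSeq b (2 * i + 1) :=
        Finset.single_le_sum (f := fun i => ε i * aSeq b (2 * i + 1))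
          (fun i _ => Nat.zero_le _) (Finset.mem_range.mpr hjN)
      omega
    refine ⟨fun j => if j < N then ε j else 0, fun j => ?_, ?_⟩
    · dsimp only
      split
      · exact hε j
      · exact Nat.zero_le _
    · have e1 : ∑ j ∈ Finset.range N, ε j * aSeq b (2 * j + 1)
          = ∑ j ∈ Finset.range N, (if j < N then ε j else 0) * aSeq b (2 * j + 1) :=
        Finset.sum_congr rfl (fun j hj => by rw [if_pos (Finset.mem_range.mp hj)])
      have e2 : ∑ j ∈ Finset.range N, (if j < N then ε j else 0) * aSeq b (2 * j + 1)
          = ∑ j ∈ Finset.range (max k N), (if j < N then ε j else 0) * aSeq b (2 * j + 1) := by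
        apply Finset.sum_subset (Finset.range_subset_range.mpr (le_max_right _ _))
        intro j _ hj
        rw [Finset.mem_range] at hj
        rw [if_neg (by omega)]
        ring
      have e3 : ∑ j ∈ Finset.range k, (if j < N then ε j else 0) * aSeq b (2 * j + 1)
          = ∑ j ∈ Finset.range (max k N), (if j < N then ε j else 0) * aSeq b (2 * j + 1) := by
        apply Finset.sum_subset (Finset.range_subset_range.mpr (le_max_left _ _))
        intro j _ hj
        rw [Finset.mem_range] at hj
        split
        · rw [hz j (by omega) (by assumption)]; ring
        · ring
      rw [e1, e2, ← e3]
  · rintro ⟨ε, hε, rfl⟩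
    exact ⟨⟨k, ε, hε, rfl⟩, sumB_lt hb0 hb k ε hε⟩

end Aux

/-- The finite set of elements of `mixA b` below `aSeq b (2k)`. -/
noncomputable def FA (b : ℕ → ℕ) (k : ℕ) : Finset ℕ :=
  @Finset.filter _ (fun m => m ∈ mixA b) (Classical.decPred _) (Finset.range (aSeq b (2 * k)))

/-- The finite set of elements of `mixB b` below `aSeq b (2k)`. -/
noncomputable def FB (b : ℕ → ℕ) (k : ℕ) : Finset ℕ :=
  @Finset.filter _ (fun m => m ∈ mixB b) (Classical.decPred _) (Finset.range (aSeq b (2 * k)))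

lemma mem_FA {b : ℕ → ℕ} {k m : ℕ} : m ∈ FA b k ↔ m ∈ mixA b ∧ m < aSeq b (2 * k) := by
  simp [FA, Finset.mem_filter, Finset.mem_range, and_comm]

lemma mem_FB {b : ℕ → ℕ} {k m : ℕ} : m ∈ FB b k ↔ m ∈ mixB b ∧ m < aSeq b (2 * k) := by
  simp [FB, Finset.mem_filter, Finset.mem_range, and_comm]

section Cards

variable {b : ℕ → ℕ} (hb0 : b 0 = 1) (hb : ∀ j, 1 ≤ j → 2 ≤ b j)

include hb0 hb

lemma cardFA : ∀ k, (FA b k).card = ∏ i ∈ Finset.range k, b (2 * i + 1) := by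
  intro k
  induction k with
  | zero =>
    have h : FA b 0 = {0} := by
      ext m
      rw [mem_FA]
      have ha : aSeq b 0 = 1 := by simp [aSeq, hb0]
      constructor
      · rintro ⟨_, hm⟩
        simp only [Nat.mul_zero, ha] at hm
        simp [Nat.lt_one_iff.mp hm]
      · intro hm
        simp only [Finset.mem_singleton] at hm
        subst hm
        refine ⟨⟨0, fun _ => 0, fun j => Nat.zero_le _, by simp⟩, ?_⟩
        simp [ha]
    simp [h]
  | succ k ih =>
    have key : FA b (k + 1) = (Finset.range (b (2 * k + 1))).biUnion
        (fun e => (FA b k).image (fun r => e * aSeq b (2 * k) + r)) := by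
      ext m
      simp only [Finset.mem_biUnion, Finset.mem_image, Finset.mem_range]
      rw [mem_FA, memA_iff hb0 hb]
      constructor
      · rintro ⟨ε, hε, rfl⟩
        refine ⟨ε k, ?_, ∑ j ∈ Finset.range k, ε j * aSeq b (2 * j), ?_, ?_⟩
        · have := hε k; have := hb (2 * k + 1) (by omega); omega
        · rw [mem_FA, memA_iff hb0 hb]
          exact ⟨ε, hε, rfl⟩
        · rw [Finset.sum_range_succ]; ring
      · rintro ⟨e, he, r, hr, rfl⟩
        rw [mem_FA, memA_iff hb0 hb] at hr
        obtain ⟨ε, hε, rfl⟩ := hr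
        refine ⟨fun j => if j < k then ε j else if j = k then e else 0, fun j => ?_, ?_⟩
        · dsimp only
          split
          · exact hε j
          · split
            · rename_i h
              subst h
              omega
            · exact Nat.zero_le _
        · have hcongr : ∑ j ∈ Finset.range k, (if j < k then ε j else if j = k then e else 0)
              * aSeq b (2 * j) = ∑ j ∈ Finset.range k, ε j * aSeq b (2 * j) :=
            Finset.sum_congr rfl (fun j hj => by rw [if_pos (Finset.mem_range.mp hj)])
          simp only [Finset.sum_range_succ, lt_irrefl, if_false, eq_self_iff_true, if_true,
            hcongr]
          ring
    have hdiv : ∀ e r : ℕ, r < aSeq b (2 * k) →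
        (e * aSeq b (2 * k) + r) / aSeq b (2 * k) = e := by
      intro e r hr
      rw [add_comm, Nat.add_mul_div_right _ _ (apos hb0 hb _), Nat.div_eq_of_lt hr, zero_add]
    rw [key, Finset.card_biUnion, Finset.prod_range_succ]
    · have himg : ∀ e ∈ Finset.range (b (2 * k + 1)),
          ((FA b k).image (fun r => e * aSeq b (2 * k) + r)).card = (FA b k).card := by
        intro e _
        exact Finset.card_image_of_injective _ (add_right_injective _)
      rw [Finset.sum_congr rfl himg, Finset.sum_const, Finset.card_range, smul_eq_mul, ih]
      ring
    · intro e _ e' _ hee'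
      apply Finset.disjoint_left.mpr
      intro m hm hm'
      simp only [Finset.mem_image] at hm hm'
      obtain ⟨r, hr, rfl⟩ := hm
      obtain ⟨r', hr', heq⟩ := hm'
      rw [mem_FA] at hr hr'
      apply hee'
      rw [← hdiv e r hr.2, ← hdiv e' r' hr'.2, heq]

lemma cardFB : ∀ k, (FB b k).card = ∏ i ∈ Finset.range k, b (2 * i + 2) := by
  intro k
  induction k with
  | zero =>
    have h : FB b 0 = {0} := by
      ext m
      rw [mem_FB]
      have ha : aSeq b 0 = 1 := by simp [aSeq, hb0]
      constructor
      · rintro ⟨_, hm⟩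
        simp only [Nat.mul_zero, ha] at hm
        simp [Nat.lt_one_iff.mp hm]
      · intro hm
        simp only [Finset.mem_singleton] at hm
        subst hm
        refine ⟨⟨0, fun _ => 0, fun j => Nat.zero_le _, by simp⟩, ?_⟩
        simp [ha]
    simp [h]
  | succ k ih =>
    have hle : aSeq b (2 * k) ≤ aSeq b (2 * k + 1) := amono hb0 hb (Nat.le_succ _)
    have key : FB b (k + 1) = (Finset.range (b (2 * k + 2))).biUnion
        (fun e => (FB b k).image (fun r => e * aSeq b (2 * k + 1) + r)) := by
      ext m
      simp only [Finset.mem_biUnion, Finset.mem_image, Finset.mem_range]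
      rw [mem_FB, memB_iff hb0 hb]
      constructor
      · rintro ⟨ε, hε, rfl⟩
        refine ⟨ε k, ?_, ∑ j ∈ Finset.range k, ε j * aSeq b (2 * j + 1), ?_, ?_⟩
        · have := hε k; have := hb (2 * k + 2) (by omega); omega
        · rw [mem_FB, memB_iff hb0 hb]
          exact ⟨ε, hε, rfl⟩
        · rw [Finset.sum_range_succ]; ring
      · rintro ⟨e, he, r, hr, rfl⟩
        rw [mem_FB, memB_iff hb0 hb] at hr
        obtain ⟨ε, hε, rfl⟩ := hr
        refine ⟨fun j => if j < k then ε j else if j = k then e else 0, fun j => ?_, ?_⟩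
        · dsimp only
          split
          · exact hε j
          · split
            · rename_i h
              subst h
              omega
            · exact Nat.zero_le _
        · have hcongr : ∑ j ∈ Finset.range k, (if j < k then ε j else if j = k then e else 0)
              * aSeq b (2 * j + 1) = ∑ j ∈ Finset.range k, ε j * aSeq b (2 * j + 1) :=
            Finset.sum_congr rfl (fun j hj => by rw [if_pos (Finset.mem_range.mp hj)])
          simp only [Finset.sum_range_succ, lt_irrefl, if_false, eq_self_iff_true, if_true,
            hcongr]
          ring
    have hdiv : ∀ e r : ℕ, r < aSeq b (2 * k + 1) →
        (e * aSeq b (2 * k + 1) + r) / aSeq b (2 * k + 1) = e := by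
      intro e r hr
      rw [add_comm, Nat.add_mul_div_right _ _ (apos hb0 hb _), Nat.div_eq_of_lt hr, zero_add]
    rw [key, Finset.card_biUnion, Finset.prod_range_succ]
    · have himg : ∀ e ∈ Finset.range (b (2 * k + 2)),
          ((FB b k).image (fun r => e * aSeq b (2 * k + 1) + r)).card = (FB b k).card := by
        intro e _
        exact Finset.card_image_of_injective _ (add_right_injective _)
      rw [Finset.sum_congr rfl himg, Finset.sum_const, Finset.card_range, smul_eq_mul, ih]
      ring
    · intro e _ e' _ hee'
      apply Finset.disjoint_left.mpr
      intro m hm hm'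
      simp only [Finset.mem_image] at hm hm'
      obtain ⟨r, hr, rfl⟩ := hm
      obtain ⟨r', hr', heq⟩ := hm'
      rw [mem_FB] at hr hr'
      apply hee'
      rw [← hdiv e r (lt_of_lt_of_le hr.2 hle), ← hdiv e' r' (lt_of_lt_of_le hr'.2 hle), heq]

lemma countA_eq (k : ℕ) : countBelow (mixA b) (aSeq b (2 * k) - 1) = (FA b k).card := by
  have hpos := apos hb0 hb (2 * k)
  have hset : mixA b ∩ Set.Iic (aSeq b (2 * k) - 1) = ↑(FA b k) := by
    ext m
    simp only [Set.mem_inter_iff, Set.mem_Iic, Finset.coe_sort_coe, Finset.mem_coe, mem_FA]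
    constructor
    · rintro ⟨h1, h2⟩; exact ⟨h1, by omega⟩
    · rintro ⟨h1, h2⟩; exact ⟨h1, by omega⟩
  rw [countBelow, hset, Set.ncard_coe_finset]

lemma countB_eq (k : ℕ) : countBelow (mixB b) (aSeq b (2 * k) - 1) = (FB b k).card := by
  have hpos := apos hb0 hb (2 * k)
  have hset : mixB b ∩ Set.Iic (aSeq b (2 * k) - 1) = ↑(FB b k) := by
    ext m
    simp only [Set.mem_inter_iff, Set.mem_Iic, Finset.coe_sort_coe, Finset.mem_coe, mem_FB]
    constructor
    · rintro ⟨h1, h2⟩; exact ⟨h1, by omega⟩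
    · rintro ⟨h1, h2⟩; exact ⟨h1, by omega⟩
  rw [countBelow, hset, Set.ncard_coe_finset]

lemma prod_split : ∀ k, (∏ i ∈ Finset.range k, b (2 * i + 1)) *
    (∏ i ∈ Finset.range k, b (2 * i + 2)) = aSeq b (2 * k) := by
  intro k
  induction k with
  | zero => simp [aSeq, hb0]
  | succ k ih =>
    have e1 : aSeq b (2 * (k + 1)) = aSeq b (2 * k) * b (2 * k + 1) * b (2 * k + 2) := by
      rw [show 2 * (k + 1) = (2 * k + 1) + 1 from by ring, astep (2 * k + 1), astep (2 * k),
        show (2 * k + 1) + 1 = 2 * k + 2 from by ring]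
    rw [Finset.prod_range_succ, Finset.prod_range_succ, e1, ← ih]
    ring

end Cards

theorem stmt11 (b : ℕ → ℕ) (hb0 : b 0 = 1) (hb : ∀ j, 1 ≤ j → 2 ≤ b j)
    (k : ℕ) (hk : 1 ≤ k) :
    countBelow (mixA b) (aSeq b (2 * k) - 1) = ∏ i ∈ Finset.range k, b (2 * i + 1) ∧
    countBelow (mixB b) (aSeq b (2 * k) - 1) = ∏ i ∈ Finset.range k, b (2 * i + 2) ∧
    countBelow (mixA b) (aSeq b (2 * k) - 1) * countBelow (mixB b) (aSeq b (2 * k) - 1)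
      = (aSeq b (2 * k) - 1) + 1 := by
  have hA := (countA_eq hb0 hb k).trans (cardFA hb0 hb k)
  have hB := (countB_eq hb0 hb k).trans (cardFB hb0 hb k)
  refine ⟨hA, hB, ?_⟩
  rw [hA, hB, prod_split hb0 hb k]
  have := apos hb0 hb (2 * k)
  omega
end
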